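/- arXiv:1212.2594 — 3 statements merged into one kernel-verified Lean document; each statement's English description precedes it below -/
import Mathlib

section
/- For every matrix F ∈ ℝ^{3×3}, the Frobenius norm of √(FᵀF) − I is at most the distance of F to SO(3), i.e. |√(FᵀF) − Id| ≤ dist(F, SO(3)). -/
open scoped BigOperators Matrix

noncomputable section

abbrev M3 := Matrix (Fin 3) (Fin 3) ℝ

section

open scoped ComplexOrder

/-- The positive semidefinite square root of a positive semidefinite matrix
(Mathlib's former `Matrix.PosSemidef.sqrt`, removed since; restored with its old definition). -/
def Matrix.PosSemidef.sqrt {n 𝕜 : Type*} [Fintype n] [DecidableEq n] [RCLike 𝕜]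
    {A : Matrix n n 𝕜} (hA : A.PosSemidef) : Matrix n n 𝕜 :=
  hA.1.eigenvectorUnitary.1 * Matrix.diagonal ((↑) ∘ (√·) ∘ hA.1.eigenvalues) *
  (star hA.1.eigenvectorUnitary : Matrix n n 𝕜)

end

/-- Frobenius norm of a 3×3 real matrix. -/
def frobNorm (F : M3) : ℝ := Real.sqrt (∑ i, ∑ j, (F i j) ^ 2)

/-- The special orthogonal group SO(3) as a set of matrices. -/
def SO3 : Set M3 := {R | Rᵀ * R = 1 ∧ R.det = 1}

/-- Frobenius distance of a matrix to SO(3). -/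
def distSO3 (F : M3) : ℝ := ⨅ R : SO3, frobNorm (F - (R : M3))

section AuxProof
open Matrix
open scoped ComplexOrder

lemma sqrt_posSemidef' {n 𝕜 : Type*} [Fintype n] [DecidableEq n] [RCLike 𝕜]
    {A : Matrix n n 𝕜} (hA : A.PosSemidef) : hA.sqrt.PosSemidef := by
  unfold Matrix.PosSemidef.sqrt
  rw [Matrix.star_eq_conjTranspose]
  apply Matrix.PosSemidef.mul_mul_conjTranspose_same
  rw [Matrix.posSemidef_diagonal_iff]
  intro i
  simp only [Function.comp]
  exact RCLike.ofReal_nonneg.mpr (Real.sqrt_nonneg _)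

lemma sqrt_mul_self' {n 𝕜 : Type*} [Fintype n] [DecidableEq n] [RCLike 𝕜]
    {A : Matrix n n 𝕜} (hA : A.PosSemidef) : hA.sqrt * hA.sqrt = A := by
  have hD : Matrix.diagonal ((↑) ∘ (√·) ∘ hA.1.eigenvalues : n → 𝕜) *
      Matrix.diagonal ((↑) ∘ (√·) ∘ hA.1.eigenvalues : n → 𝕜) =
      Matrix.diagonal (RCLike.ofReal ∘ hA.1.eigenvalues) := by
    rw [Matrix.diagonal_mul_diagonal]; congr 1; funext i
    simp only [Function.comp]
    rw [← RCLike.ofReal_mul, Real.mul_self_sqrt (hA.eigenvalues_nonneg i)]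
  have hspec := hA.1.spectral_theorem
  rw [Unitary.conjStarAlgAut_apply] at hspec
  unfold Matrix.PosSemidef.sqrt
  rw [← hD] at hspec
  have hsu : star (hA.1.eigenvectorUnitary : Matrix n n 𝕜) * hA.1.eigenvectorUnitary = 1 :=
    Unitary.coe_star_mul_self _
  simp only [Matrix.mul_assoc] at hspec ⊢
  rw [← Matrix.mul_assoc (star (hA.1.eigenvectorUnitary : Matrix n n 𝕜)), hsu, Matrix.one_mul]
  exact hspec.symm
lemma trace_le_trace_of_sq (G S : M3) (hS : S.PosSemidef) (h : Gᵀ * G = S * S) :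
    G.trace ≤ S.trace := by
  have hH := hS.1
  set U : M3 := (hH.eigenvectorUnitary : M3) with hUdef
  have hsu : star U * U = 1 := Unitary.coe_star_mul_self hH.eigenvectorUnitary
  have hus : U * star U = 1 := Unitary.coe_mul_star_self hH.eigenvectorUnitary
  set μ : Fin 3 → ℝ := hH.eigenvalues with hμdef
  have hdiag : star U * S * U = Matrix.diagonal μ := by
    have := hH.conjStarAlgAut_star_eigenvectorUnitary
    rw [Unitary.conjStarAlgAut_star_apply] at this
    simpa [Function.comp] using this
  set v : Fin 3 → Fin 3 → ℝ := fun i j => U j i with hvdef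
  have hstarU : ∀ i j, (star U) i j = U j i := by
    intro i j; simp [Matrix.star_apply]
  -- columns are unit vectors
  have h1 : ∀ i, ∑ j, v i j ^ 2 = 1 := by
    intro i
    have := congrFun (congrFun hsu i) i
    simpa [Matrix.mul_apply, Matrix.one_apply, hstarU, sq, hvdef] using this
  -- G applied to columns has norm |μ i|
  have hdiag2 : star U * (Gᵀ * G) * U = Matrix.diagonal (fun i => μ i ^ 2) := by
    have : star U * (S * S) * U = (star U * S * U) * (star U * S * U) := by
      rw [show (star U * S * U) * (star U * S * U)
            = star U * S * ((U * star U) * (S * U)) by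
          simp only [Matrix.mul_assoc]
        , hus]
      simp only [Matrix.one_mul, Matrix.mul_assoc]
    rw [h, this, hdiag, Matrix.diagonal_mul_diagonal]
    simp [sq]
  have h2 : ∀ i, ∑ j, (G *ᵥ v i) j ^ 2 = μ i ^ 2 := by
    intro i
    have := congrFun (congrFun hdiag2 i) i
    simp only [Matrix.diagonal_apply_eq] at this
    rw [← this]
    simp only [Matrix.mul_apply, Matrix.mulVec, dotProduct, hstarU,
      Matrix.transpose_apply, hvdef, Finset.sum_mul, Finset.mul_sum, sq]
    rw [Finset.sum_comm]
    apply Finset.sum_congr rfl; intro j _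
    rw [Finset.sum_comm]
    apply Finset.sum_congr rfl; intro k _
    apply Finset.sum_congr rfl; intro l _
    ring
  -- trace of G via columns
  have h3 : G.trace = ∑ i, ∑ j, v i j * (G *ᵥ v i) j := by
    have : G.trace = (star U * G * U).trace := by
      rw [Matrix.trace_mul_cycle, hus, Matrix.one_mul]
    rw [this]
    simp only [Matrix.trace, Matrix.diag, Matrix.mul_apply, Matrix.mulVec,
      dotProduct, hstarU, hvdef, Finset.sum_mul, Finset.mul_sum]
    apply Finset.sum_congr rfl; intro i _
    rw [Finset.sum_comm]
    apply Finset.sum_congr rfl; intro j _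
    apply Finset.sum_congr rfl; intro k _
    ring
  have hμ0 : ∀ i, 0 ≤ μ i := fun i => hS.eigenvalues_nonneg i
  have h5 : S.trace = ∑ i, μ i := by
    have : S.trace = (star U * S * U).trace := by
      rw [Matrix.trace_mul_cycle, hus, Matrix.one_mul]
    rw [this, hdiag, Matrix.trace_diagonal]
  rw [h3, h5]
  apply Finset.sum_le_sum
  intro i _
  have cs := Finset.sum_mul_sq_le_sq_mul_sq Finset.univ (v i) (fun j => (G *ᵥ v i) j)
  rw [h1, h2, one_mul] at cs
  calc ∑ j, v i j * (G *ᵥ v i) j ≤ |∑ j, v i j * (G *ᵥ v i) j| := le_abs_self _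
    _ = Real.sqrt ((∑ j, v i j * (G *ᵥ v i) j) ^ 2) := (Real.sqrt_sq_eq_abs _).symm
    _ ≤ Real.sqrt (μ i ^ 2) := Real.sqrt_le_sqrt cs
    _ = μ i := by rw [Real.sqrt_sq (hμ0 i)]

lemma frobSq (X : M3) : ∑ i, ∑ j, (X i j) ^ 2 = (Xᵀ * X).trace := by
  simp only [Matrix.trace, Matrix.diag, Matrix.mul_apply, Matrix.transpose_apply, sq]
  rw [Finset.sum_comm]

lemma key (F R : M3) (hR : Rᵀ * R = 1) :
    frobNorm ((Matrix.posSemidef_conjTranspose_mul_self F).sqrt - 1) ≤ frobNorm (F - R) := by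
  set hPS := Matrix.posSemidef_conjTranspose_mul_self F
  set S : M3 := hPS.sqrt with hSdef
  have hSps : S.PosSemidef := sqrt_posSemidef' hPS
  have hconj : ∀ X : M3, Xᴴ = Xᵀ := fun X => by
    ext i j; simp [Matrix.conjTranspose_apply]
  have hSS : S * S = Fᵀ * F := by
    rw [hSdef, sqrt_mul_self' hPS, hconj]
  have hST : Sᵀ = S := by
    rw [← hconj]; exact hSps.1
  have hRR : R * Rᵀ = 1 := by
    rw [mul_eq_one_comm] at hR; exact hR
  -- trace inequality
  have htr : (Rᵀ * F).trace ≤ S.trace := by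
    apply trace_le_trace_of_sq _ _ hSps
    calc (Rᵀ * F)ᵀ * (Rᵀ * F) = Fᵀ * (R * Rᵀ) * F := by
          simp [Matrix.transpose_mul, Matrix.mul_assoc]
      _ = S * S := by rw [hRR, hSS]; simp
  apply Real.sqrt_le_sqrt
  rw [frobSq, frobSq]
  have e1 : ((S - 1)ᵀ * (S - 1)).trace = (Fᵀ * F).trace - 2 * S.trace + 3 := by
    have : (S - 1)ᵀ * (S - 1) = S * S - Sᵀ - S + 1 := by
      rw [Matrix.transpose_sub, hST]
      simp [Matrix.sub_mul, Matrix.mul_sub]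
      abel
    rw [this, hST, hSS]
    simp [Matrix.trace_sub, Matrix.trace_add, Matrix.trace_one]
    ring
  have e2 : ((F - R)ᵀ * (F - R)).trace = (Fᵀ * F).trace - 2 * (Rᵀ * F).trace + 3 := by
    have : (F - R)ᵀ * (F - R) = Fᵀ * F - Fᵀ * R - Rᵀ * F + Rᵀ * R := by
      rw [Matrix.transpose_sub]
      simp [Matrix.sub_mul, Matrix.mul_sub]
      abel
    rw [this, hR]
    have : (Fᵀ * R).trace = (Rᵀ * F).trace := by
      rw [← Matrix.trace_transpose, Matrix.transpose_mul, Matrix.transpose_transpose]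
    simp [Matrix.trace_sub, Matrix.trace_add, Matrix.trace_one, this]
    ring
  rw [e1, e2]
  linarith
end AuxProof

instance : Nonempty SO3 := ⟨⟨1, by constructor <;> simp⟩⟩

/-- For every `F ∈ ℝ^{3×3}`, `|√(FᵀF) − Id| ≤ dist(F, SO(3))`, where `√(FᵀF)` is the
positive semidefinite square root of `FᵀF` (note `Fᴴ = Fᵀ` over `ℝ`). -/
theorem norm_sqrt_sub_id_le_dist_SO3 (F : M3) :
    frobNorm ((Matrix.posSemidef_conjTranspose_mul_self F).sqrt - 1) ≤ distSO3 F :=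
  le_ciInf fun R => key F R R.2.1
end
end

section
/- Suppose W : ℝ^{3×3} → [0,∞] is continuous, satisfies W(Id + G) = Q(G) + o(|G|²) as G → 0 for some quadratic form Q on ℝ^{3×3}, satisfies W(F) ≥ c₁ dist²(F, SO(3)) for all F, and W(F) ≤ c₂ dist²(F, SO(3)) whenever dist²(F, SO(3)) ≤ ρ, with c₁, c₂, ρ > 0. Then Q satisfies c₁ |sym G|² ≤ Q(G) = Q(sym G) ≤ c₂ |sym G|² for all G ∈ ℝ^{3×3}. -/
open scoped BigOperators Matrix
open Filter Topology

set_option maxHeartbeats 1000000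
noncomputable section

/-- Symmetric part `sym G = (G + Gᵀ)/2`. -/
def symPart (G : M3) : M3 := (2⁻¹ : ℝ) • (G + Gᵀ)


section FrobFacts
attribute [local instance] Matrix.frobeniusSeminormedAddCommGroup
  Matrix.frobeniusNormedAddCommGroup Matrix.frobeniusNormedSpace Matrix.frobeniusIsBoundedSMul

lemma frobNorm_eq (A : M3) : frobNorm A = ‖A‖ := by
  rw [Matrix.frobenius_norm_def, frobNorm]
  rw [Real.sqrt_eq_rpow]
  congr 1
  refine Finset.sum_congr rfl fun i _ => Finset.sum_congr rfl fun j _ => ?_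
  rw [Real.norm_eq_abs, ← sq_abs (A i j), ← Real.rpow_natCast |A i j| 2]
  norm_num

lemma frobNorm_nonneg (A : M3) : 0 ≤ frobNorm A := by rw [frobNorm_eq]; exact norm_nonneg _
lemma frobNorm_add_le (A B : M3) : frobNorm (A + B) ≤ frobNorm A + frobNorm B := by
  simp only [frobNorm_eq]; exact norm_add_le _ _
lemma frobNorm_smul (c : ℝ) (A : M3) : frobNorm (c • A) = |c| * frobNorm A := by
  simp only [frobNorm_eq]; rw [norm_smul, Real.norm_eq_abs]
lemma frobNorm_mul_le (A B : M3) : frobNorm (A * B) ≤ frobNorm A * frobNorm B := by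
  simp only [frobNorm_eq]; exact Matrix.frobenius_norm_mul A B
lemma frobNorm_transpose (A : M3) : frobNorm Aᵀ = frobNorm A := by
  simp only [frobNorm_eq]; exact Matrix.frobenius_norm_transpose A
lemma frobNorm_zero : frobNorm (0 : M3) = 0 := by simp [frobNorm_eq]
lemma frobNorm_eq_zero {A : M3} : frobNorm A = 0 ↔ A = 0 := by
  rw [frobNorm_eq]; exact norm_eq_zero
lemma frobNorm_neg (A : M3) : frobNorm (-A) = frobNorm A := by
  simp only [frobNorm_eq]; exact norm_neg _
lemma frobNorm_one_le : frobNorm (1 : M3) ≤ 2 := by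
  rw [frobNorm]
  have : (∑ i, ∑ j, ((1 : M3) i j) ^ 2) = 3 := by
    simp [Matrix.one_apply, Fin.sum_univ_three]
  rw [this]
  nlinarith [Real.sq_sqrt (by norm_num : (3:ℝ) ≥ 0) , Real.sqrt_nonneg (3:ℝ)]
end FrobFacts




lemma det_one_sub_skew (S : M3) (hS : Sᵀ = -S) : (1 - S).det ≠ 0 := by
  intro h
  obtain ⟨v, hv0, hv⟩ := (Matrix.exists_mulVec_eq_zero_iff).mpr h
  rw [Matrix.sub_mulVec, Matrix.one_mulVec, sub_eq_zero] at hv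
  have key : v ⬝ᵥ (S *ᵥ v) = -(v ⬝ᵥ (S *ᵥ v)) := by
    conv_lhs => rw [Matrix.dotProduct_mulVec]
    have h1 : v ᵥ* S = Sᵀ *ᵥ v := by
      conv_lhs => rw [← Matrix.transpose_transpose S, Matrix.vecMul_transpose]
    rw [h1, hS, Matrix.neg_mulVec, neg_dotProduct, dotProduct_comm]
  have h0 : v ⬝ᵥ (S *ᵥ v) = 0 := by linarith
  rw [← hv] at h0
  exact hv0 (dotProduct_self_eq_zero.mp h0)

lemma cayley (S : M3) (hS : Sᵀ = -S) (hn : frobNorm S ≤ 1) :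
    ∃ R : M3, R ∈ SO3 ∧ frobNorm (1 + S - R) ≤ 2 * frobNorm S ^ 2 := by
  set x : M3 := (2⁻¹ : ℝ) • S with hxdef
  have hxx : x + x = S := by
    rw [hxdef, ← add_smul]; norm_num
  have hxT : xᵀ = -x := by rw [hxdef, Matrix.transpose_smul, hS, smul_neg]
  have hxval : frobNorm x = 2⁻¹ * frobNorm S := by
    rw [hxdef, frobNorm_smul, abs_of_pos (by norm_num : (0:ℝ) < 2⁻¹)]
  have hxn : frobNorm x ≤ 2⁻¹ := by rw [hxval]; nlinarith [frobNorm_nonneg S]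
  set a : M3 := 1 + x with hadef
  set b : M3 := 1 - x with hbdef
  have hbT : bᵀ = a := by
    rw [hbdef, Matrix.transpose_sub, Matrix.transpose_one, hxT, sub_neg_eq_add, hadef]
  have haT : aᵀ = b := by
    rw [hadef, Matrix.transpose_add, Matrix.transpose_one, hxT, ← sub_eq_add_neg, hbdef]
  have hbdet : b.det ≠ 0 := det_one_sub_skew x hxT
  have hadet' : a.det = b.det := by rw [← hbT, Matrix.det_transpose]
  have hadet : a.det ≠ 0 := by rw [hadet']; exact hbdet
  have hbu : IsUnit b.det := isUnit_iff_ne_zero.mpr hbdet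
  have hau : IsUnit a.det := isUnit_iff_ne_zero.mpr hadet
  have hcomm : a * b = b * a := by
    rw [hadef, hbdef]; noncomm_ring
  refine ⟨b⁻¹ * a, ⟨?_, ?_⟩, ?_⟩
  · -- orthogonality
    have h1 : (b⁻¹ * a)ᵀ = b * a⁻¹ := by
      rw [Matrix.transpose_mul, haT, Matrix.transpose_nonsing_inv, hbT]
    rw [h1]
    have hrev : a⁻¹ * b⁻¹ = b⁻¹ * a⁻¹ := by
      rw [← Matrix.mul_inv_rev, ← Matrix.mul_inv_rev, hcomm]
    calc b * a⁻¹ * (b⁻¹ * a) = b * (a⁻¹ * b⁻¹) * a := by noncomm_ring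
    _ = b * (b⁻¹ * a⁻¹) * a := by rw [hrev]
    _ = (b * b⁻¹) * (a⁻¹ * a) := by noncomm_ring
    _ = 1 := by rw [Matrix.mul_nonsing_inv _ hbu, Matrix.nonsing_inv_mul _ hau, one_mul]
  · -- determinant
    rw [Matrix.det_mul, Matrix.det_nonsing_inv, hadet', Ring.inverse_mul_cancel _ hbu]
  · -- the quantitative estimate
    set R : M3 := b⁻¹ * a with hRdef
    have hbR : b * R = a := by
      rw [hRdef, ← mul_assoc, Matrix.mul_nonsing_inv _ hbu, one_mul]
    have hR1 : R - 1 = b⁻¹ * S := by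
      have h2 : b * (R - 1) = S := by
        rw [mul_sub, hbR, mul_one, hadef, hbdef, ← hxx]; abel
      calc R - 1 = b⁻¹ * (b * (R - 1)) := by
            rw [← mul_assoc, Matrix.nonsing_inv_mul _ hbu, one_mul]
      _ = b⁻¹ * S := by rw [h2]
    have hbinv : frobNorm b⁻¹ ≤ 4 := by
      have h3 : b⁻¹ = 1 + b⁻¹ * x := by
        have h := Matrix.nonsing_inv_mul _ hbu
        calc b⁻¹ = b⁻¹ * b + b⁻¹ * x := by
              conv_rhs => rw [hbdef]
              noncomm_ring
        _ = 1 + b⁻¹ * x := by rw [h]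
      have h4 : frobNorm b⁻¹ ≤ frobNorm (1 : M3) + frobNorm b⁻¹ * frobNorm x := by
        calc frobNorm b⁻¹ = frobNorm (1 + b⁻¹ * x) := by rw [← h3]
        _ ≤ frobNorm (1 : M3) + frobNorm (b⁻¹ * x) := frobNorm_add_le _ _
        _ ≤ frobNorm (1 : M3) + frobNorm b⁻¹ * frobNorm x := by
            linarith [frobNorm_mul_le b⁻¹ x]
      nlinarith [frobNorm_one_le, frobNorm_nonneg b⁻¹, frobNorm_nonneg x, hxn]
    have h5 : R = 1 + x + x * R := by
      have h := hbR
      rw [hbdef, hadef, sub_mul, one_mul, sub_eq_iff_eq_add] at h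
      exact h.trans (by abel)
    have hkey : 1 + S - R = -(x * (R - 1)) := by
      have h6 : 1 + S - R = x - x * R := by
        conv_lhs => rw [← hxx, h5]
        abel
      rw [h6]; noncomm_ring
    rw [hkey, frobNorm_neg]
    have h6 : frobNorm (R - 1) ≤ 4 * frobNorm S := by
      rw [hR1]
      calc frobNorm (b⁻¹ * S) ≤ frobNorm b⁻¹ * frobNorm S := frobNorm_mul_le _ _
      _ ≤ 4 * frobNorm S := by nlinarith [frobNorm_nonneg S]
    calc frobNorm (x * (R - 1)) ≤ frobNorm x * frobNorm (R - 1) := frobNorm_mul_le _ _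
    _ ≤ 2 * frobNorm S ^ 2 := by
        nlinarith [frobNorm_nonneg (R - 1), frobNorm_nonneg x, frobNorm_nonneg S, hxval]


lemma one_mem_SO3 : (1 : M3) ∈ SO3 := ⟨by simp, Matrix.det_one⟩

instance inst_s2 : Nonempty SO3 := ⟨⟨1, one_mem_SO3⟩⟩

lemma distSO3_nonneg (F : M3) : 0 ≤ distSO3 F :=
  Real.iInf_nonneg fun R => frobNorm_nonneg _

lemma distSO3_le (F R : M3) (hR : R ∈ SO3) : distSO3 F ≤ frobNorm (F - R) := by
  exact ciInf_le ⟨0, by rintro y ⟨S, rfl⟩; exact frobNorm_nonneg _⟩ (⟨R, hR⟩ : SO3)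

lemma distSO3_exists_lt (F : M3) {c : ℝ} (h : distSO3 F < c) :
    ∃ R ∈ SO3, frobNorm (F - R) < c := by
  obtain ⟨⟨R, hR⟩, hlt⟩ := exists_lt_of_ciInf_lt h
  exact ⟨R, hR, hlt⟩

lemma symPart_smul (t : ℝ) (A : M3) : symPart (t • A) = t • symPart A := by
  rw [symPart, symPart, Matrix.transpose_smul, smul_comm, ← smul_add]

lemma symPart_add (A B : M3) : symPart (A + B) = symPart A + symPart B := by
  rw [symPart, symPart, symPart, Matrix.transpose_add, ← smul_add]
  congr 1; abel

lemma symPart_one : symPart (1 : M3) = 1 := by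
  rw [symPart, Matrix.transpose_one]
  rw [show (1 : M3) + 1 = (2:ℝ) • 1 by rw [two_smul]]
  rw [smul_smul]; norm_num

lemma frobNorm_symPart_le (A : M3) : frobNorm (symPart A) ≤ frobNorm A := by
  rw [symPart, frobNorm_smul, abs_of_pos (by norm_num : (0:ℝ) < 2⁻¹)]
  have h := frobNorm_add_le A Aᵀ
  rw [frobNorm_transpose] at h
  linarith [frobNorm_nonneg (A + Aᵀ)]

lemma so3_sym_bound (R : M3) (hR : Rᵀ * R = 1) :
    frobNorm (symPart (R - 1)) ≤ 2⁻¹ * frobNorm (R - 1) ^ 2 := by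
  set E : M3 := R - 1 with hEdef
  have expand : Eᵀ * E = Rᵀ * R - Rᵀ - R + 1 := by
    rw [hEdef, Matrix.transpose_sub, Matrix.transpose_one]; noncomm_ring
  rw [hR] at expand
  have h : E + Eᵀ = -(Eᵀ * E) := by
    rw [expand, hEdef, Matrix.transpose_sub, Matrix.transpose_one]; abel
  rw [symPart, h, smul_neg, frobNorm_neg, frobNorm_smul,
    abs_of_pos (by norm_num : (0:ℝ) < 2⁻¹)]
  have h2 : frobNorm (Eᵀ * E) ≤ frobNorm E ^ 2 := by
    have := frobNorm_mul_le Eᵀ E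
    rw [frobNorm_transpose] at this
    nlinarith [frobNorm_nonneg E]
  nlinarith

lemma hrevtri (X Y : M3) : frobNorm X - frobNorm Y ≤ frobNorm (X - Y) := by
  have h := frobNorm_add_le (X - Y) Y
  rw [sub_add_cancel] at h
  linarith

lemma frobNorm_sub_le' (A B : M3) : frobNorm (A - B) ≤ frobNorm A + frobNorm B := by
  rw [sub_eq_add_neg]
  calc frobNorm (A + -B) ≤ frobNorm A + frobNorm (-B) := frobNorm_add_le _ _
  _ = frobNorm A + frobNorm B := by rw [frobNorm_neg]

lemma symPart_neg (A : M3) : symPart (-A) = -symPart A := by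
  rw [← neg_one_smul ℝ A, symPart_smul, neg_one_smul]

lemma symPart_sub (A B : M3) : symPart (A - B) = symPart A - symPart B := by
  rw [sub_eq_add_neg, symPart_add, symPart_neg, sub_eq_add_neg]

lemma symPart_transpose_eq (A : M3) : (symPart A)ᵀ = symPart A := by
  rw [symPart, Matrix.transpose_smul, Matrix.transpose_add, Matrix.transpose_transpose, add_comm]

lemma symPart_symPart (A : M3) : symPart (symPart A) = symPart A := by
  have h := symPart_transpose_eq A
  rw [symPart, h, show symPart A + symPart A = (2:ℝ) • symPart A from (two_smul ℝ _).symm,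
    smul_smul]
  norm_num

lemma skew_of_sub_symPart (A : M3) : (A - symPart A)ᵀ = -(A - symPart A) := by
  rw [Matrix.transpose_sub, symPart_transpose_eq, neg_sub]
  rw [sub_eq_sub_iff_add_eq_add]
  have h2 : symPart A + symPart A = A + Aᵀ := by
    rw [symPart, ← add_smul]; norm_num
  rw [h2]; exact add_comm _ _

/-- If `W : ℝ^{3×3} → [0,∞]` is continuous, has the quadratic expansion
`W(Id + G) = Q(G) + o(|G|²)` at the identity for a quadratic form `Q`, satisfies
`W(F) ≥ c₁ dist²(F,SO(3))` and `W(F) ≤ c₂ dist²(F,SO(3))` whenever `dist²(F,SO(3)) ≤ ρ`,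
then `c₁|sym G|² ≤ Q(G) = Q(sym G) ≤ c₂|sym G|²` for all `G`. -/
theorem quadratic_form_bounds (W : M3 → ℝ) (Q : QuadraticForm ℝ M3)
    (c₁ c₂ ρ : ℝ) (hc₁ : 0 < c₁) (hc₂ : 0 < c₂) (hρ : 0 < ρ)
    (hW0 : ∀ F, 0 ≤ W F)
    (hWcont : Continuous W)
    (hexp : Tendsto (fun G : M3 => |W (1 + G) - Q G| / (frobNorm G) ^ 2)
      (nhdsWithin 0 {0}ᶜ) (nhds 0))
    (hlow : ∀ F, c₁ * (distSO3 F) ^ 2 ≤ W F)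
    (hupp : ∀ F, (distSO3 F) ^ 2 ≤ ρ → W F ≤ c₂ * (distSO3 F) ^ 2) :
    ∀ G : M3, c₁ * (frobNorm (symPart G)) ^ 2 ≤ Q G ∧ Q G = Q (symPart G) ∧
      Q (symPart G) ≤ c₂ * (frobNorm (symPart G)) ^ 2 := by
  -- W at the identity vanishes
  have hd1 : distSO3 1 = 0 := by
    refine le_antisymm ?_ (distSO3_nonneg 1)
    have := distSO3_le 1 1 one_mem_SO3
    rwa [sub_self, frobNorm_zero] at this
  have hW1 : W 1 = 0 := by
    refine le_antisymm ?_ (hW0 1)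
    have := hupp 1 (by rw [hd1]; nlinarith)
    rw [hd1] at this
    simpa using this
  -- the basic limit
  have limA : ∀ Gm : M3, Tendsto (fun t : ℝ => W (1 + t • Gm) / t ^ 2)
      (𝓝[>] (0:ℝ)) (𝓝 (Q Gm)) := by
    intro Gm
    by_cases hG : Gm = 0
    · subst hG
      have hfun : (fun t : ℝ => W (1 + t • (0:M3)) / t ^ 2) = fun _ => 0 := by
        funext t; rw [smul_zero, add_zero, hW1, zero_div]
      rw [hfun, QuadraticMap.map_zero]
      exact tendsto_const_nhds
    · have hGn : frobNorm Gm ≠ 0 := fun h => hG (frobNorm_eq_zero.mp h)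
      have h1 : Tendsto (fun t : ℝ => t • Gm) (𝓝[>] 0) (𝓝[≠] (0 : M3)) := by
        rw [tendsto_nhdsWithin_iff]
        constructor
        · have h0 : Tendsto (fun t : ℝ => t • Gm) (𝓝 0) (𝓝 ((0:ℝ) • Gm)) :=
            (continuous_id.smul continuous_const).tendsto 0
          rw [zero_smul] at h0
          exact h0.mono_left nhdsWithin_le_nhds
        · filter_upwards [self_mem_nhdsWithin] with t ht
          simp only [Set.mem_compl_iff, Set.mem_singleton_iff]
          exact smul_ne_zero (ne_of_gt ht) hG
      have h2 := hexp.comp h1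
      have h3 : Tendsto (fun t : ℝ => |W (1 + t • Gm) / t ^ 2 - Q Gm|) (𝓝[>] 0) (𝓝 0) := by
        have h4 : Tendsto (fun t : ℝ =>
            (|W (1 + t • Gm) - Q (t • Gm)| / frobNorm (t • Gm) ^ 2) * frobNorm Gm ^ 2)
            (𝓝[>] 0) (𝓝 (0 * frobNorm Gm ^ 2)) := h2.mul_const _
        rw [zero_mul] at h4
        refine h4.congr' ?_
        filter_upwards [self_mem_nhdsWithin] with t ht
        have ht0 : (t:ℝ) ≠ 0 := ne_of_gt ht
        have hfs : frobNorm (t • Gm) = t * frobNorm Gm := by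
          rw [frobNorm_smul, abs_of_pos ht]
        have hQs : Q (t • Gm) = t * t * Q Gm := by
          rw [QuadraticMap.map_smul, smul_eq_mul]
        rw [hfs, hQs]
        have habs : |W (1 + t • Gm) - t * t * Q Gm|
            = t ^ 2 * |W (1 + t • Gm) / t ^ 2 - Q Gm| := by
          have e : W (1 + t • Gm) - t * t * Q Gm
              = t ^ 2 * (W (1 + t • Gm) / t ^ 2 - Q Gm) := by
            rw [mul_sub, mul_comm (t ^ 2) (W (1 + t • Gm) / t ^ 2),
              div_mul_cancel₀ _ (pow_ne_zero 2 ht0)]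
            ring
          rw [e, abs_mul, abs_of_pos (show (0:ℝ) < t ^ 2 by positivity)]
        rw [habs, mul_pow]
        field_simp
      rw [← tendsto_sub_nhds_zero_iff]
      exact (tendsto_zero_iff_abs_tendsto_zero _).mpr h3
  -- lower bound
  have hQlow : ∀ Gm : M3, c₁ * frobNorm (symPart Gm) ^ 2 ≤ Q Gm := by
    intro Gm
    set s := frobNorm (symPart Gm) with hs
    have hs0 : 0 ≤ s := frobNorm_nonneg _
    set k := (1 + 2 * frobNorm Gm) ^ 2 / 2 + 1 with hk
    have hbound : ∀ᶠ t in 𝓝[>] (0:ℝ),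
        c₁ * (max (s - k * t) 0) ^ 2 ≤ W (1 + t • Gm) / t ^ 2 := by
      filter_upwards [Ioo_mem_nhdsGT (show (0:ℝ) < 1 by norm_num)] with t ht
      obtain ⟨ht0, ht1⟩ := ht
      set F : M3 := 1 + t • Gm with hF
      have hd0 : 0 ≤ distSO3 F := distSO3_nonneg F
      have hF1 : frobNorm (F - 1) = t * frobNorm Gm := by
        rw [hF, show (1:M3) + t • Gm - 1 = t • Gm by abel, frobNorm_smul, abs_of_pos ht0]
      have hdle : distSO3 F ≤ t * frobNorm Gm := by
        rw [← hF1]; exact distSO3_le F 1 one_mem_SO3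
      obtain ⟨R, hRSO, hFR⟩ := distSO3_exists_lt F
        (show distSO3 F < distSO3 F + t ^ 2 by nlinarith)
      have hsym : symPart (F - R) = t • symPart Gm - symPart (R - 1) := by
        rw [hF, show (1:M3) + t • Gm - R = t • Gm - (R - 1) by abel,
          symPart_sub, symPart_smul]
      have h1 : frobNorm (t • symPart Gm) - frobNorm (symPart (R - 1))
          ≤ frobNorm (symPart (F - R)) := by
        rw [hsym]; exact hrevtri _ _
      have h2 : frobNorm (symPart (F - R)) ≤ frobNorm (F - R) := frobNorm_symPart_le _
      have h3 : frobNorm (symPart (R - 1)) ≤ 2⁻¹ * frobNorm (R - 1) ^ 2 :=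
        so3_sym_bound R hRSO.1
      have h4 : frobNorm (R - 1) ≤ frobNorm (F - R) + t * frobNorm Gm := by
        have h5 := frobNorm_add_le (-(F - R)) (F - 1)
        rw [frobNorm_neg, show -(F - R) + (F - 1) = R - 1 by abel, hF1] at h5
        linarith
      have hts : frobNorm (t • symPart Gm) = t * s := by
        rw [frobNorm_smul, abs_of_pos ht0, hs]
      have hFRle : frobNorm (F - R) ≤ t * frobNorm Gm + t ^ 2 := by linarith
      have hR1le : frobNorm (R - 1) ≤ t * (1 + 2 * frobNorm Gm) := by
        have ht2 : t ^ 2 ≤ t := by nlinarith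
        nlinarith
      have hR1n : 0 ≤ frobNorm (R - 1) := frobNorm_nonneg _
      have hdist_lb : t * s - k * t ^ 2 ≤ distSO3 F := by
        have hsq2 : frobNorm (R - 1) ^ 2 ≤ (t * (1 + 2 * frobNorm Gm)) ^ 2 :=
          pow_le_pow_left₀ hR1n hR1le 2
        have h7 : t * s - 2⁻¹ * (t * (1 + 2 * frobNorm Gm)) ^ 2 ≤ frobNorm (F - R) := by
          linarith
        have h8 : 2⁻¹ * (t * (1 + 2 * frobNorm Gm)) ^ 2 + t ^ 2 = k * t ^ 2 := by
          rw [hk]; ring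
        rw [← h8]
        linarith
      have hmax0 : 0 ≤ max (s - k * t) 0 := le_max_right _ _
      have hmax : t * max (s - k * t) 0 ≤ distSO3 F := by
        rcases le_or_gt (s - k * t) 0 with h | h
        · rw [max_eq_right h]; simpa using hd0
        · have he : t * (s - k * t) = t * s - k * t ^ 2 := by ring
          rw [max_eq_left h.le, he]
          exact hdist_lb
      have hsq : (t * max (s - k * t) 0) ^ 2 ≤ distSO3 F ^ 2 :=
        pow_le_pow_left₀ (mul_nonneg ht0.le hmax0) hmax 2
      rw [le_div_iff₀ (by positivity : (0:ℝ) < t ^ 2)]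
      calc c₁ * max (s - k * t) 0 ^ 2 * t ^ 2 = c₁ * (t * max (s - k * t) 0) ^ 2 := by ring
      _ ≤ c₁ * distSO3 F ^ 2 := mul_le_mul_of_nonneg_left hsq hc₁.le
      _ ≤ W F := hlow F
    have hcont : Tendsto (fun t : ℝ => c₁ * (max (s - k * t) 0) ^ 2) (𝓝 (0:ℝ))
        (𝓝 (c₁ * (max (s - k * 0) 0) ^ 2)) := by
      exact (continuous_const.mul (((continuous_const.sub
        (continuous_const.mul continuous_id)).max continuous_const).pow 2)).tendsto 0
    rw [mul_zero, sub_zero, max_eq_left hs0] at hcont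
    exact le_of_tendsto_of_tendsto (hcont.mono_left nhdsWithin_le_nhds) (limA Gm) hbound
  -- upper bound
  have hQupp : ∀ Gm : M3, Q Gm ≤ c₂ * frobNorm (symPart Gm) ^ 2 := by
    intro Gm
    set s := frobNorm (symPart Gm) with hs
    have hs0 : 0 ≤ s := frobNorm_nonneg _
    set K : M3 := Gm - symPart Gm with hKdef
    have hKT : Kᵀ = -K := skew_of_sub_symPart Gm
    have hKle : frobNorm K ≤ 2 * frobNorm Gm := by
      have := frobNorm_sub_le' Gm (symPart Gm)
      have := frobNorm_symPart_le Gm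
      rw [hKdef]
      linarith
    have hK0 : 0 ≤ frobNorm K := frobNorm_nonneg _
    have hG0 : 0 ≤ frobNorm Gm := frobNorm_nonneg _
    set δ : ℝ := min (Real.sqrt ρ / (frobNorm Gm + 1)) (min 1 (2 * frobNorm Gm + 1)⁻¹) with hδ
    have hδpos : 0 < δ := by
      apply lt_min
      · positivity
      · apply lt_min one_pos
        positivity
    have hbound : ∀ᶠ t in 𝓝[>] (0:ℝ),
        W (1 + t • Gm) / t ^ 2 ≤ c₂ * (s + 2 * t * frobNorm K ^ 2) ^ 2 := by
      filter_upwards [Ioo_mem_nhdsGT hδpos] with t ht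
      obtain ⟨ht0, htδ⟩ := ht
      have ht1 : t < 1 := lt_of_lt_of_le htδ (le_trans (min_le_right _ _) (min_le_left _ _))
      have htinv : t < (2 * frobNorm Gm + 1)⁻¹ :=
        lt_of_lt_of_le htδ (le_trans (min_le_right _ _) (min_le_right _ _))
      have htρ : t < Real.sqrt ρ / (frobNorm Gm + 1) := lt_of_lt_of_le htδ (min_le_left _ _)
      set F : M3 := 1 + t • Gm with hF
      have hd0 : 0 ≤ distSO3 F := distSO3_nonneg F
      have hF1 : frobNorm (F - 1) = t * frobNorm Gm := by
        rw [hF, show (1:M3) + t • Gm - 1 = t • Gm by abel, frobNorm_smul, abs_of_pos ht0]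
      have hdle : distSO3 F ≤ t * frobNorm Gm := by
        rw [← hF1]; exact distSO3_le F 1 one_mem_SO3
      -- dist² ≤ ρ
      have hdρ : distSO3 F ^ 2 ≤ ρ := by
        have h9 : t * (frobNorm Gm + 1) < Real.sqrt ρ := by
          rw [div_eq_mul_inv] at htρ
          have : (0:ℝ) < frobNorm Gm + 1 := by positivity
          calc t * (frobNorm Gm + 1)
              < Real.sqrt ρ * (frobNorm Gm + 1)⁻¹ * (frobNorm Gm + 1) := by
                apply mul_lt_mul_of_pos_right htρ this
          _ = Real.sqrt ρ := by field_simp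
        have h10 : distSO3 F < Real.sqrt ρ := by nlinarith
        nlinarith [Real.sq_sqrt hρ.le, Real.sqrt_nonneg ρ]
      -- Cayley rotation
      have hSkew : (t • K)ᵀ = -(t • K) := by
        rw [Matrix.transpose_smul, hKT, smul_neg]
      have hSn : frobNorm (t • K) = t * frobNorm K := by
        rw [frobNorm_smul, abs_of_pos ht0]
      have hSn1 : frobNorm (t • K) ≤ 1 := by
        rw [hSn]
        have : t * frobNorm K < (2 * frobNorm Gm + 1)⁻¹ * (2 * frobNorm Gm + 1) := by
          rcases eq_or_lt_of_le hK0 with h | h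
          · rw [← h, mul_zero]; positivity
          · have h11 : frobNorm K < 2 * frobNorm Gm + 1 := by linarith
            calc t * frobNorm K < (2 * frobNorm Gm + 1)⁻¹ * frobNorm K := by
                  exact mul_lt_mul_of_pos_right htinv h
            _ ≤ (2 * frobNorm Gm + 1)⁻¹ * (2 * frobNorm Gm + 1) := by
                  apply mul_le_mul_of_nonneg_left h11.le (by positivity)
        rw [inv_mul_cancel₀ (by positivity : (2 * frobNorm Gm + 1) ≠ 0)] at this
        exact this.le
      obtain ⟨R, hRSO, hclose⟩ := cayley (t • K) hSkew hSn1
      have hsplit : F - R = (1 + t • K - R) + t • symPart Gm := by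
        rw [hF, hKdef, smul_sub]; abel
      have hFRle : frobNorm (F - R) ≤ 2 * (t * frobNorm K) ^ 2 + t * s := by
        rw [hsplit]
        have := frobNorm_add_le (1 + t • K - R) (t • symPart Gm)
        have h12 : frobNorm (t • symPart Gm) = t * s := by
          rw [frobNorm_smul, abs_of_pos ht0, hs]
        rw [hSn] at hclose
        linarith
      have hdub : distSO3 F ≤ t * (s + 2 * t * frobNorm K ^ 2) := by
        have := distSO3_le F R hRSO
        have h13 : 2 * (t * frobNorm K) ^ 2 + t * s = t * (s + 2 * t * frobNorm K ^ 2) := by ring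
        linarith [h13 ▸ hFRle]
      have hW := hupp F hdρ
      have hsq : distSO3 F ^ 2 ≤ (t * (s + 2 * t * frobNorm K ^ 2)) ^ 2 :=
        pow_le_pow_left₀ hd0 hdub 2
      rw [div_le_iff₀ (by positivity : (0:ℝ) < t ^ 2)]
      calc W F ≤ c₂ * distSO3 F ^ 2 := hW
      _ ≤ c₂ * (t * (s + 2 * t * frobNorm K ^ 2)) ^ 2 := mul_le_mul_of_nonneg_left hsq hc₂.le
      _ = c₂ * (s + 2 * t * frobNorm K ^ 2) ^ 2 * t ^ 2 := by ring
    have hcont : Tendsto (fun t : ℝ => c₂ * (s + 2 * t * frobNorm K ^ 2) ^ 2) (𝓝 (0:ℝ))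
        (𝓝 (c₂ * (s + 2 * 0 * frobNorm K ^ 2) ^ 2)) := by
      exact (continuous_const.mul ((continuous_const.add
        ((continuous_const.mul continuous_id).mul continuous_const)).pow 2)).tendsto 0
    rw [show c₂ * (s + 2 * 0 * frobNorm K ^ 2) ^ 2 = c₂ * s ^ 2 by ring] at hcont
    exact le_of_tendsto_of_tendsto (limA Gm) (hcont.mono_left nhdsWithin_le_nhds) hbound
  -- assembly
  intro G
  set S : M3 := symPart G with hSdef
  set K : M3 := G - symPart G with hKdef
  have hsymK : symPart K = 0 := by
    rw [hKdef, symPart_sub, symPart_symPart, sub_self]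
  have hQK : Q K = 0 := by
    have hu := hQupp K
    have hl := hQlow K
    rw [hsymK, frobNorm_zero] at hu hl
    simp only [ne_eq, OfNat.ofNat_ne_zero, not_false_eq_true, zero_pow, mul_zero] at hu hl
    linarith
  have hQnonneg : ∀ X : M3, 0 ≤ Q X := fun X =>
    le_trans (by positivity) (hQlow X)
  have hpol : QuadraticMap.polar Q S K = 0 := by
    by_contra hp
    set p := QuadraticMap.polar Q S K with hpdef
    have hlin : ∀ t : ℝ, 0 ≤ Q S + t * p := by
      intro t
      have hexpand : Q (S + t • K) = Q S + Q (t • K) + QuadraticMap.polar Q S (t • K) := by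
        rw [QuadraticMap.polar]; ring
      have h1 : Q (t • K) = 0 := by rw [QuadraticMap.map_smul, hQK, smul_eq_mul, mul_zero]
      have h2 : QuadraticMap.polar Q S (t • K) = t * p := by
        rw [QuadraticMap.polar_smul_right, smul_eq_mul, hpdef]
      have h3 := hQnonneg (S + t • K)
      rw [hexpand, h1, h2] at h3
      linarith
    have h4 := hlin ((-(Q S) - 1) / p)
    rw [div_mul_cancel₀ _ hp] at h4
    linarith
  have hQGS : Q G = Q S := by
    have hexpand : Q (S + K) = Q S + Q K + QuadraticMap.polar Q S K := by
      rw [QuadraticMap.polar]; ring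
    rw [show G = S + K by rw [hSdef, hKdef]; abel, hexpand, hQK, hpol, add_zero, add_zero]
  refine ⟨hQlow G, hQGS, ?_⟩
  have := hQupp S
  rwa [hSdef, symPart_symPart] at this
end
end

section
/- Frame indifference (W(RF) = W(F) for all R ∈ SO(3)) of an energy density W with quadratic expansion W(Id + G) = Q(G) + o(|G|²) at the identity implies Q(G) = Q(sym G) for all G ∈ ℝ^{3×3}. -/
open scoped BigOperators Matrix
open Filter Topology

noncomputable section

namespace FIaux

lemma frobNorm_zero : frobNorm 0 = 0 := by simp [frobNorm]

lemma frobNorm_pos {F : M3} (h : F ≠ 0) : 0 < frobNorm F := by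
  have h1 : 0 < ∑ i, ∑ j, (F i j) ^ 2 := by
    obtain ⟨i, j, hij⟩ : ∃ i j, F i j ≠ 0 := by
      by_contra hc
      push_neg at hc
      exact h (by ext i j; simp [hc])
    refine Finset.sum_pos' (fun i _ => Finset.sum_nonneg fun j _ => sq_nonneg _)
      ⟨i, Finset.mem_univ i, Finset.sum_pos' (fun j _ => sq_nonneg _)
        ⟨j, Finset.mem_univ j, by positivity⟩⟩
  exact Real.sqrt_pos.mpr h1

lemma frobNorm_smul (c : ℝ) (F : M3) : frobNorm (c • F) = |c| * frobNorm F := by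
  unfold frobNorm
  have h : ∑ i, ∑ j, ((c • F) i j) ^ 2 = c ^ 2 * ∑ i, ∑ j, (F i j) ^ 2 := by
    simp only [Finset.mul_sum, Matrix.smul_apply, smul_eq_mul, mul_pow]
  rw [h, Real.sqrt_mul (sq_nonneg c), Real.sqrt_sq_eq_abs]

lemma frobNorm_continuous : Continuous frobNorm := by
  apply Real.continuous_sqrt.comp
  exact continuous_finset_sum _ fun i _ => continuous_finset_sum _ fun j _ =>
    (continuous_id.matrix_elem i j).pow 2

lemma quadratic_continuous (Q : QuadraticForm ℝ M3) : Continuous fun x => Q x := by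
  classical
  set B := QuadraticMap.associatedHom ℝ Q with hBdef
  have key : ∀ x : M3, Q x = ∑ i, ∑ j, ∑ k, ∑ l,
      x i j * (x k l * B (Matrix.single k l 1) (Matrix.single i j 1)) := by
    intro x
    have hx : x = ∑ i, ∑ j, x i j • Matrix.single i j (1 : ℝ) := by
      conv_lhs => rw [Matrix.matrix_eq_sum_single x]
      refine Finset.sum_congr rfl fun i _ => Finset.sum_congr rfl fun j _ => ?_
      rw [Matrix.smul_single, smul_eq_mul, mul_one]
    have h1 : Q x = B x x := (QuadraticMap.associated_eq_self_apply ℝ Q x).symm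
    rw [h1]
    conv_lhs => rw [hx]
    simp only [map_sum, map_smul, LinearMap.coe_sum, Finset.sum_apply, LinearMap.smul_apply,
      smul_eq_mul, Finset.mul_sum]
  have : (fun x : M3 => Q x) = fun x => ∑ i, ∑ j, ∑ k, ∑ l,
      x i j * (x k l * B (Matrix.single k l 1) (Matrix.single i j 1)) :=
    funext key
  rw [this]
  refine continuous_finset_sum _ fun i _ => continuous_finset_sum _ fun j _ =>
    continuous_finset_sum _ fun k _ => continuous_finset_sum _ fun l _ => ?_
  exact (continuous_id.matrix_elem i j).mul ((continuous_id.matrix_elem k l).mul continuous_const)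

section Exp

attribute [local instance] Matrix.linftyOpSemiNormedRing Matrix.linftyOpNormedRing
  Matrix.linftyOpNormedAlgebra

lemma exp_slope (A : M3) :
    Tendsto (fun t : ℝ => t⁻¹ • (NormedSpace.exp (t • A) - 1)) (𝓝[≠] (0 : ℝ)) (𝓝 A) := by
  have h := hasDerivAt_exp_smul_const (𝕂 := ℝ) (A : M3) (0 : ℝ)
  rw [hasDerivAt_iff_tendsto_slope] at h
  have h0 : NormedSpace.exp ((0 : ℝ) • A) = 1 := by rw [zero_smul, NormedSpace.exp_zero]
  simp only [slope_fun_def, zero_smul, NormedSpace.exp_zero, vsub_eq_sub, sub_zero, one_mul] at h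
  exact h

lemma exp_cont (A : M3) : Continuous fun t : ℝ => NormedSpace.exp (t • A) :=
  (NormedSpace.exp_continuous (𝔸 := M3)).comp (continuous_id.smul continuous_const)

end Exp

lemma exp_skew_mem_SO3 {A : M3} (hA : Aᵀ = -A) (t : ℝ) : NormedSpace.exp (t • A) ∈ SO3 := by
  have horth : ∀ s : ℝ, (NormedSpace.exp (s • A))ᵀ * NormedSpace.exp (s • A) = 1 := by
    intro s
    have h1 : (NormedSpace.exp (s • A))ᵀ = NormedSpace.exp (-(s • A)) := by
      rw [← Matrix.exp_transpose, Matrix.transpose_smul, hA, smul_neg]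
    rw [h1, ← Matrix.exp_add_of_commute _ _ ((Commute.refl (s • A)).neg_left),
      neg_add_cancel]
    exact NormedSpace.exp_zero
  refine ⟨horth t, ?_⟩
  -- determinant
  have hsq : ∀ s : ℝ, (NormedSpace.exp (s • A)).det * (NormedSpace.exp (s • A)).det = 1 := by
    intro s
    have := congrArg Matrix.det (horth s)
    rwa [Matrix.det_mul, Matrix.det_transpose, Matrix.det_one] at this
  have hcont : Continuous fun s : ℝ => (NormedSpace.exp (s • A)).det :=
    (FIaux.exp_cont A).matrix_det
  have h0 : (NormedSpace.exp ((0 : ℝ) • A)).det = 1 := by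
    rw [zero_smul, NormedSpace.exp_zero, Matrix.det_one]
  rcases mul_self_eq_one_iff.mp (hsq t) with h | h
  · exact h
  · exfalso
    have himg := intermediate_value_uIcc (a := (0 : ℝ)) (b := t)
      (f := fun s => (NormedSpace.exp (s • A)).det) hcont.continuousOn
    have h0mem : (0 : ℝ) ∈ Set.uIcc ((NormedSpace.exp ((0:ℝ) • A)).det)
        ((NormedSpace.exp (t • A)).det) := by
      rw [h0, h]
      exact Set.mem_uIcc.mpr (Or.inr ⟨by norm_num, by norm_num⟩)
    obtain ⟨s, _, hs⟩ := himg h0mem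
    have hs' : (NormedSpace.exp (s • A)).det = 0 := hs
    have := hsq s
    rw [hs'] at this
    norm_num at this

end FIaux

namespace FIaux

lemma key (W : M3 → ℝ) (Q : QuadraticForm ℝ M3)
    (hexp : Tendsto (fun G : M3 => |W (1 + G) - Q G| / (frobNorm G) ^ 2)
      (nhdsWithin 0 {0}ᶜ) (nhds 0))
    (B : M3) (hB : B ≠ 0) (h : ℝ → M3)
    (hh : Tendsto (fun t => t⁻¹ • h t) (𝓝[≠] (0 : ℝ)) (𝓝 B)) :
    Tendsto (fun t => W (1 + h t) / t ^ 2) (𝓝[≠] (0 : ℝ)) (𝓝 (Q B)) := by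
  have hQc := quadratic_continuous Q
  have htne : ∀ᶠ t in 𝓝[≠] (0 : ℝ), t ≠ 0 :=
    eventually_mem_nhdsWithin
  have hne : ∀ᶠ t in 𝓝[≠] (0 : ℝ), h t ≠ 0 := by
    filter_upwards [hh.eventually_ne hB] with t ht
    intro h0
    exact ht (by rw [h0, smul_zero])
  have h0 : Tendsto h (𝓝[≠] (0 : ℝ)) (𝓝 0) := by
    have h1 : Tendsto (fun t : ℝ => t • (t⁻¹ • h t)) (𝓝[≠] (0 : ℝ)) (𝓝 ((0 : ℝ) • B)) :=
      (tendsto_id.mono_left nhdsWithin_le_nhds).smul hh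
    rw [zero_smul] at h1
    refine h1.congr' ?_
    filter_upwards [htne] with t ht
    rw [smul_smul, mul_inv_cancel₀ ht, one_smul]
  have h0' : Tendsto h (𝓝[≠] (0 : ℝ)) (𝓝[≠] (0 : M3)) := by
    rw [tendsto_nhdsWithin_iff]
    exact ⟨h0, hne.mono fun t ht => ht⟩
  have t1 : Tendsto (fun t => |W (1 + h t) - Q (h t)| / (frobNorm (h t)) ^ 2)
      (𝓝[≠] (0 : ℝ)) (𝓝 0) := hexp.comp h0'
  have t2 : Tendsto (fun t => frobNorm (t⁻¹ • h t) ^ 2) (𝓝[≠] (0 : ℝ))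
      (𝓝 (frobNorm B ^ 2)) := ((frobNorm_continuous.tendsto B).comp hh).pow 2
  have t3 : Tendsto (fun t => |W (1 + h t) - Q (h t)| / (frobNorm (h t)) ^ 2
      * frobNorm (t⁻¹ • h t) ^ 2) (𝓝[≠] (0 : ℝ)) (𝓝 0) := by
    simpa using t1.mul t2
  have hd : Tendsto (fun t => (W (1 + h t) - Q (h t)) / t ^ 2) (𝓝[≠] (0 : ℝ)) (𝓝 0) := by
    apply squeeze_zero_norm' _ t3
    filter_upwards [htne, hne] with t ht hht
    have hf : frobNorm (h t) ≠ 0 := ne_of_gt (frobNorm_pos hht)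
    have hsm : frobNorm (t⁻¹ • h t) ^ 2 = frobNorm (h t) ^ 2 / t ^ 2 := by
      rw [frobNorm_smul, mul_pow, sq_abs, inv_pow]
      rw [div_eq_inv_mul]
    apply le_of_eq
    rw [Real.norm_eq_abs, abs_div, abs_of_nonneg (sq_nonneg t), hsm]
    field_simp
  have hq : Tendsto (fun t => Q (t⁻¹ • h t)) (𝓝[≠] (0 : ℝ)) (𝓝 (Q B)) :=
    (hQc.tendsto B).comp hh
  have hsum : Tendsto (fun t => (W (1 + h t) - Q (h t)) / t ^ 2 + Q (t⁻¹ • h t))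
      (𝓝[≠] (0 : ℝ)) (𝓝 (Q B)) := by
    simpa using hd.add hq
  refine hsum.congr' ?_
  filter_upwards [htne] with t ht
  have hQs : Q (t⁻¹ • h t) = Q (h t) / t ^ 2 := by
    rw [QuadraticMap.map_smul, smul_eq_mul, sq]
    field_simp
  rw [hQs]
  ring

end FIaux


/-- Frame indifference (`W(RF) = W(F)` for all `R ∈ SO(3)`) of a continuous energy density
`W : ℝ^{3×3} → [0,∞]` with quadratic expansion `W(Id + G) = Q(G) + o(|G|²)` at the identity
implies `Q(G) = Q(sym G)` for all `G ∈ ℝ^{3×3}`. -/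
theorem frame_indifference_implies_Q_sym (W : M3 → ℝ) (Q : QuadraticForm ℝ M3)
    (hW0 : ∀ F, 0 ≤ W F)
    (hWcont : Continuous W)
    (hFI : ∀ R ∈ SO3, ∀ F : M3, W (R * F) = W F)
    (hexp : Tendsto (fun G : M3 => |W (1 + G) - Q G| / (frobNorm G) ^ 2)
      (nhdsWithin 0 {0}ᶜ) (nhds 0)) :
    ∀ G : M3, Q G = Q (symPart G) := by

  have hQc := FIaux.quadratic_continuous Q
  haveI : NeBot (𝓝[≠] (0 : M3)) := Module.punctured_nhds_neBot ℝ M3 0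
  -- W 1 = 0
  have hW1 : W 1 = 0 := by
    have l1 : Tendsto (fun X : M3 => W (1 + X) - Q X) (𝓝[≠] (0 : M3)) (𝓝 (W 1)) := by
      have hc : Continuous fun X : M3 => W (1 + X) - Q X :=
        (hWcont.comp (continuous_const.add continuous_id)).sub hQc
      have h3 : Tendsto (fun X : M3 => W (1 + X) - Q X) (𝓝[≠] (0 : M3))
          (𝓝 (W (1 + 0) - Q 0)) := (hc.tendsto 0).mono_left nhdsWithin_le_nhds
      simpa using h3
    have l2 : Tendsto (fun X : M3 => W (1 + X) - Q X) (𝓝[≠] (0 : M3)) (𝓝 0) := by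
      have t2 : Tendsto (fun X : M3 => frobNorm X ^ 2) (𝓝[≠] (0 : M3)) (𝓝 0) := by
        have h4 : Tendsto (fun X : M3 => frobNorm X ^ 2) (𝓝[≠] (0 : M3))
            (𝓝 (frobNorm 0 ^ 2)) :=
          ((FIaux.frobNorm_continuous.pow 2).tendsto 0).mono_left nhdsWithin_le_nhds
        simpa [FIaux.frobNorm_zero] using h4
      have t3 : Tendsto (fun X : M3 => |W (1 + X) - Q X| / frobNorm X ^ 2 * frobNorm X ^ 2)
          (𝓝[≠] (0 : M3)) (𝓝 0) := by simpa using hexp.mul t2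
      apply squeeze_zero_norm' _ t3
      filter_upwards [eventually_mem_nhdsWithin] with X hX
      have hf : frobNorm X ≠ 0 := ne_of_gt (FIaux.frobNorm_pos hX)
      apply le_of_eq
      rw [Real.norm_eq_abs, div_mul_cancel₀ _ (pow_ne_zero 2 hf)]
    exact tendsto_nhds_unique l1 l2
  intro G
  by_cases hG0 : G = 0
  · rw [hG0]
    have : symPart 0 = (0 : M3) := by
      simp [symPart]
    rw [this]
  set E := symPart G with hEdef
  set A := G - E with hAdef
  have hAskew : Aᵀ = -A := by
    rw [hAdef, hEdef]
    unfold symPart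
    rw [Matrix.transpose_sub, Matrix.transpose_smul, Matrix.transpose_add,
      Matrix.transpose_transpose]
    module
  have hGEA : A + E = G := by rw [hAdef]; abel
  have hRSO : ∀ t : ℝ, NormedSpace.exp (t • A) ∈ SO3 := fun t =>
    FIaux.exp_skew_mem_SO3 hAskew t
  set h : ℝ → M3 := fun t => NormedSpace.exp (t • A) * (1 + t • E) - 1 with hhdef
  have hWeq : ∀ t : ℝ, W (1 + h t) = W (1 + t • E) := by
    intro t
    have h1 : (1 : M3) + h t = NormedSpace.exp (t • A) * (1 + t • E) := by
      rw [hhdef]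
      show (1 : M3) + (NormedSpace.exp (t • A) * (1 + t • E) - 1) = _
      module
    rw [h1, hFI _ (hRSO t)]
  have hh : Tendsto (fun t : ℝ => t⁻¹ • h t) (𝓝[≠] (0 : ℝ)) (𝓝 G) := by
    have hsplit : ∀ t : ℝ, h t = (NormedSpace.exp (t • A) - 1)
        + t • (NormedSpace.exp (t • A) * E) := by
      intro t
      rw [hhdef]
      show NormedSpace.exp (t • A) * (1 + t • E) - 1 = _
      rw [Matrix.mul_add, Matrix.mul_one, Matrix.mul_smul]
      abel
    have hpart1 : Tendsto (fun t : ℝ => t⁻¹ • (NormedSpace.exp (t • A) - 1))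
        (𝓝[≠] (0 : ℝ)) (𝓝 A) := FIaux.exp_slope A
    have hpart2 : Tendsto (fun t : ℝ => NormedSpace.exp (t • A) * E)
        (𝓝[≠] (0 : ℝ)) (𝓝 ((1 : M3) * E)) := by
      have hc : Continuous fun t : ℝ => NormedSpace.exp (t • A) * E :=
        (FIaux.exp_cont A).matrix_mul continuous_const
      have h5 : Tendsto (fun t : ℝ => NormedSpace.exp (t • A) * E) (𝓝[≠] (0 : ℝ))
          (𝓝 (NormedSpace.exp ((0 : ℝ) • A) * E)) :=
        (hc.tendsto 0).mono_left nhdsWithin_le_nhds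
      simpa [NormedSpace.exp_zero] using h5
    have hlim : Tendsto (fun t : ℝ => t⁻¹ • (NormedSpace.exp (t • A) - 1)
        + NormedSpace.exp (t • A) * E) (𝓝[≠] (0 : ℝ)) (𝓝 (A + 1 * E)) :=
      hpart1.add hpart2
    rw [Matrix.one_mul, hGEA] at hlim
    refine hlim.congr' ?_
    filter_upwards [eventually_mem_nhdsWithin] with t ht
    have ht0 : (t : ℝ) ≠ 0 := ht
    rw [hsplit t, smul_add, smul_smul, inv_mul_cancel₀ ht0, one_smul]
  by_cases hE0 : E = 0
  · have k1 := FIaux.key W Q hexp G hG0 h hh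
    have hconst : (fun t : ℝ => W (1 + h t) / t ^ 2) = fun _ => (0 : ℝ) := by
      funext t
      rw [hWeq t, hE0]
      simp [hW1]
    rw [hconst] at k1
    have hQG : (0 : ℝ) = Q G := tendsto_nhds_unique tendsto_const_nhds k1
    rw [hE0, ← hQG]
    simp
  · have k1 := FIaux.key W Q hexp G hG0 h hh
    have hh2 : Tendsto (fun t : ℝ => t⁻¹ • (t • E)) (𝓝[≠] (0 : ℝ)) (𝓝 E) := by
      refine Tendsto.congr' ?_
        (tendsto_const_nhds : Tendsto (fun _ : ℝ => E) (𝓝[≠] (0 : ℝ)) (𝓝 E))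
      filter_upwards [eventually_mem_nhdsWithin] with t ht
      have ht0 : (t : ℝ) ≠ 0 := ht
      rw [smul_smul, inv_mul_cancel₀ ht0, one_smul]
    have k2 := FIaux.key W Q hexp E hE0 (fun t => t • E) hh2
    rw [show (fun t : ℝ => W (1 + h t) / t ^ 2) = (fun t : ℝ => W (1 + t • E) / t ^ 2) from
      funext fun t => by rw [hWeq t]] at k1
    exact tendsto_nhds_unique k1 k2
end
end
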